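/- Let α ≥ 2 and K ≥ 1. If a tree T on a finite metric space admits an edge partition into levels E¹,…,Eʳ such that for each l, the head j of every component of E¹∪⋯∪Eˡ satisfies b(j) ≥ lK and every edge of Eˡ has length at most 2α^(lK+1), then the total cost of T is at most 2·α^(2K+1)/(α^K - 1) · Σ_{v ≠ 0} α^(b(v)). -/

import Mathlib

open SimpleGraph Walk

section Helpers

variable {V : Type*}

/-- In a path, any two edges containing the initial vertex are equal. -/
lemma path_first_edge' {G : SimpleGraph V} {a z : V} {p : G.Walk a z} (hp : p.IsPath)
    {e e' : Sym2 V} (he : e ∈ p.edges) (he' : e' ∈ p.edges) (hae : a ∈ e) (hae' : a ∈ e') :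
    e = e' := by
  cases p with
  | nil => simp at he
  | cons h q =>
    rename_i bb
    have hq : a ∉ q.support := ((Walk.cons_isPath_iff h q).mp hp).2
    have key : ∀ f ∈ (Walk.cons h q).edges, a ∈ f → f = s(a, bb) := by
      intro f hf haf
      rw [Walk.edges_cons, List.mem_cons] at hf
      rcases hf with rfl | hf
      · rfl
      · exfalso
        induction f using Sym2.ind with
        | _ x y =>
          rcases Sym2.mem_iff.mp haf with rfl | rfl
          · exact hq (q.fst_mem_support_of_mem_edges hf)
          · exact hq (q.snd_mem_support_of_mem_edges hf)
    rw [key e he hae, key e' he' hae']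

lemma mem_support_of_mem_edges' {G : SimpleGraph V} {x y v : V} {p : G.Walk x y}
    {e : Sym2 V} (he : e ∈ p.edges) (hv : v ∈ e) : v ∈ p.support := by
  induction e using Sym2.ind with
  | _ a c =>
    rcases Sym2.mem_iff.mp hv with rfl | rfl
    · exact p.fst_mem_support_of_mem_edges he
    · exact p.snd_mem_support_of_mem_edges he

lemma far_exists {T : SimpleGraph V} (hT : T.IsTree) (root : V) {e : Sym2 V}
    (he : e ∈ T.edgeSet) :
    ∃ x, x ∈ e ∧ ¬ (T.deleteEdges {e}).Reachable root x := by
  induction e using Sym2.ind with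
  | _ u v =>
    have huv : T.Adj u v := T.mem_edgeSet.mp he
    have hb : T.IsBridge s(u, v) := isAcyclic_iff_forall_adj_isBridge.mp hT.IsAcyclic huv
    have hbr : ¬ (T.deleteEdges {s(u, v)}).Reachable u v := isBridge_iff.mp hb
    by_contra hcon
    push_neg at hcon
    have h1 := hcon u (Sym2.mem_mk_left u v)
    have h2 := hcon v (Sym2.mem_mk_right u v)
    exact hbr (h1.symm.trans h2)

lemma tree_sep [DecidableEq V] {T : SimpleGraph V} (hT : T.IsTree) (root : V)
    {e₁ e₂ : Sym2 V} (h₁ : e₁ ∈ T.edgeSet) (h₂ : e₂ ∈ T.edgeSet)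
    {c₁ c₂ : V} (hc₁ : c₁ ∈ e₁) (hr₁ : ¬ (T.deleteEdges {e₁}).Reachable root c₁)
    (hc₂ : c₂ ∈ e₂) (hr₂ : ¬ (T.deleteEdges {e₂}).Reachable root c₂)
    (w : T.Walk c₁ c₂) (hw₁ : e₁ ∉ w.edges) (hw₂ : e₂ ∉ w.edges) : e₁ = e₂ := by
  -- every walk from root to cᵢ uses eᵢ
  have key₁ : ∀ (q : T.Walk root c₁), e₁ ∈ q.edges := by
    intro q; by_contra h
    exact hr₁ ⟨q.toDeleteEdges {e₁} (fun f hf hfe => h (Set.mem_singleton_iff.mp hfe ▸ hf))⟩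
  have key₂ : ∀ (q : T.Walk root c₂), e₂ ∈ q.edges := by
    intro q; by_contra h
    exact hr₂ ⟨q.toDeleteEdges {e₂} (fun f hf hfe => h (Set.mem_singleton_iff.mp hfe ▸ hf))⟩
  obtain ⟨w0⟩ := hT.isConnected.preconnected root c₁
  let P1 : T.Path root c₁ := w0.toPath
  have hP1path : (P1 : T.Walk root c₁).IsPath := P1.property
  have he₁P : e₁ ∈ (P1 : T.Walk root c₁).edges := key₁ _
  by_cases hcc : c₁ = c₂
  · subst hcc
    have he₂P : e₂ ∈ (P1 : T.Walk root c₁).edges := key₂ _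
    -- both edges contain the final vertex of the path P1; use reverse
    have hrev : (P1 : T.Walk root c₁).reverse.IsPath := hP1path.reverse
    refine path_first_edge' hrev ?_ ?_ hc₁ hc₂ <;>
      simpa [Walk.edges_reverse] using (by assumption)
  · -- c₂ lies on P1 since e₂ ∈ P1.edges
    have he₂P : e₂ ∈ (P1 : T.Walk root c₁).edges := by
      have := key₂ ((P1 : T.Walk root c₁).append w)
      rw [Walk.edges_append, List.mem_append] at this
      exact this.resolve_right hw₂
    have hc₂sup : c₂ ∈ (P1 : T.Walk root c₁).support := mem_support_of_mem_edges' he₂P hc₂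
    have hpre : e₁ ∉ ((P1 : T.Walk root c₁).takeUntil c₂ hc₂sup).edges := by
      intro hmem
      have hc₁pre : c₁ ∈ ((P1 : T.Walk root c₁).takeUntil c₂ hc₂sup).support :=
        mem_support_of_mem_edges' hmem hc₁
      have hdrop : c₁ ∈ ((P1 : T.Walk root c₁).dropUntil c₂ hc₂sup).support.tail := by
        have h1 : c₁ ∈ ((P1 : T.Walk root c₁).dropUntil c₂ hc₂sup).support :=
          Walk.end_mem_support _
        rw [Walk.support_eq_cons ((P1 : T.Walk root c₁).dropUntil c₂ hc₂sup)] at h1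
        rcases List.mem_cons.mp h1 with h | h
        · exact absurd h.symm (fun hh => hcc hh.symm)
        · exact h
      have hnodup : ((P1 : T.Walk root c₁)).support.Nodup := hP1path.support_nodup
      rw [← Walk.take_spec (P1 : T.Walk root c₁) hc₂sup, Walk.support_append] at hnodup
      exact (List.disjoint_of_nodup_append hnodup) hc₁pre hdrop
    -- walk root → c₁ avoiding e₁ : contradiction
    have : e₁ ∈ (((P1 : T.Walk root c₁).takeUntil c₂ hc₂sup).append w.reverse).edges := key₁ _
    rw [Walk.edges_append, List.mem_append, Walk.edges_reverse, List.mem_reverse] at this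
    exact absurd (this.resolve_left hpre) hw₁

end Helpers

/-- The length of a tree edge, as a function on `Sym2 V`, in a metric space. -/
noncomputable def edgeLen (V : Type*) [MetricSpace V] : Sym2 V → ℝ :=
  Sym2.lift ⟨fun u w => dist u w, fun u w => dist_comm u w⟩

theorem stmt_17 (V : Type*) [Fintype V] [DecidableEq V] [MetricSpace V]
    (root : V) (α : ℝ) (hα : 2 ≤ α) (K : ℕ) (hK : 1 ≤ K) (b : V → ℕ)
    (T : SimpleGraph V) [DecidableRel T.Adj] (hT : T.IsTree)
    (r : ℕ) (lev : Sym2 V → ℕ)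
    (hlev : ∀ e ∈ T.edgeSet, 1 ≤ lev e ∧ lev e ≤ r)
    -- (i): the head of each component of the first l levels has b-value ≥ lK
    (hhead : ∀ l : ℕ, 1 ≤ l → l ≤ r → ∀ v : V,
      ∃ j : V, (SimpleGraph.fromEdgeSet {e | e ∈ T.edgeSet ∧ lev e ≤ l}).Reachable v j ∧
        (j = root ∨ l * K ≤ b j))
    -- (ii): edges at level l have length at most 2α^(lK+1)
    (hlen : ∀ u w : V, T.Adj u w → dist u w ≤ 2 * α ^ (lev s(u, w) * K + 1)) :
    ∑ e ∈ T.edgeFinset, edgeLen V e ≤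
      (2 * α ^ (2 * K + 1) / (α ^ K - 1)) * ∑ v ∈ Finset.univ.erase root, α ^ (b v) := by
  classical
  have hα1 : (1:ℝ) < α := lt_of_lt_of_le one_lt_two hα
  have hα0 : (0:ℝ) < α := lt_trans zero_lt_one hα1
  set G : ℕ → SimpleGraph V :=
    fun m => SimpleGraph.fromEdgeSet {e | e ∈ T.edgeSet ∧ lev e ≤ m} with hGdef
  have hGle : ∀ (m : ℕ) (e : Sym2 V), m < lev e → (G m) ≤ T.deleteEdges {e} := by
    intro m e hm a c hac
    rw [hGdef, SimpleGraph.fromEdgeSet_adj] at hac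
    obtain ⟨⟨hTm, hlevm⟩, hne⟩ := hac
    refine SimpleGraph.deleteEdges_adj.mpr ⟨T.mem_edgeSet.mp hTm, ?_⟩
    intro hcon
    rw [Set.mem_singleton_iff] at hcon
    rw [← hcon] at hm
    omega
  -- choose the far endpoint of each edge
  have hfar : ∀ e : Sym2 V, ∃ x, e ∈ T.edgeSet →
      (x ∈ e ∧ ¬ (T.deleteEdges {e}).Reachable root x) := by
    intro e
    by_cases he : e ∈ T.edgeSet
    · obtain ⟨x, hx⟩ := far_exists hT root he
      exact ⟨x, fun _ => hx⟩
    · exact ⟨root, fun h => absurd h he⟩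
  choose c hc using hfar
  have hc1 : ∀ e ∈ T.edgeSet, c e ∈ e := fun e he => (hc e he).1
  have hc2 : ∀ e ∈ T.edgeSet, ¬ (T.deleteEdges {e}).Reachable root (c e) :=
    fun e he => (hc e he).2
  -- choose the charged head of each edge
  have hJex : ∀ e : Sym2 V, ∃ j, e ∈ T.edgeSet → ((G (lev e - 1)).Reachable (c e) j ∧
      (lev e - 1) * K ≤ b j ∧ j ≠ root) := by
    intro e
    by_cases he : e ∈ T.edgeSet
    swap
    · exact ⟨root, fun h => absurd h he⟩
    refine ?_
    suffices hsuff : ∃ j, (G (lev e - 1)).Reachable (c e) j ∧ (lev e - 1) * K ≤ b j ∧ j ≠ root by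
      obtain ⟨j, hj⟩ := hsuff; exact ⟨j, fun _ => hj⟩
    obtain ⟨h1e, h2e⟩ := hlev e he
    have hroot : ∀ j, (G (lev e - 1)).Reachable (c e) j → j ≠ root := by
      intro j hj hjr
      subst hjr
      have : (T.deleteEdges {e}).Reachable (c e) j :=
        SimpleGraph.Reachable.mono (hGle (lev e - 1) e (by omega)) hj
      exact hc2 e he this.symm
    rcases Nat.lt_or_ge (lev e) 2 with h2 | h2
    · have hl1 : lev e = 1 := by omega
      refine ⟨c e, SimpleGraph.Reachable.refl _, ?_, hroot _ (SimpleGraph.Reachable.refl _)⟩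
      simp [hl1]
    · obtain ⟨j, hj1, hj2⟩ := hhead (lev e - 1) (by omega) (by omega) (c e)
      refine ⟨j, hj1, ?_, hroot j hj1⟩
      rcases hj2 with hjr | hb
      · exact absurd hjr (hroot j hj1)
      · exact hb
  choose J hJ using hJex
  have hJ1 : ∀ e ∈ T.edgeSet, (G (lev e - 1)).Reachable (c e) (J e) := fun e he => (hJ e he).1
  have hJ2 : ∀ e ∈ T.edgeSet, (lev e - 1) * K ≤ b (J e) := fun e he => (hJ e he).2.1
  have hJ3 : ∀ e ∈ T.edgeSet, J e ≠ root := fun e he => (hJ e he).2.2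
  -- injectivity of e ↦ (J e, lev e)
  have hinj : ∀ e₁ ∈ T.edgeSet, ∀ e₂ ∈ T.edgeSet, lev e₁ = lev e₂ → J e₁ = J e₂ → e₁ = e₂ := by
    intro e₁ h₁ e₂ h₂ hl hJeq
    have hreach : (G (lev e₁ - 1)).Reachable (c e₁) (c e₂) := by
      have ha := hJ1 e₁ h₁
      have hb2 := hJ1 e₂ h₂
      rw [← hl, ← hJeq] at hb2
      exact ha.trans hb2.symm
    obtain ⟨w⟩ := hreach
    have hedges : ∀ f ∈ w.edges, f ∈ T.edgeSet ∧ lev f ≤ lev e₁ - 1 := by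
      intro f hf
      have := w.edges_subset_edgeSet hf
      rw [hGdef, SimpleGraph.edgeSet_fromEdgeSet] at this
      exact this.1
    have hsub : ∀ f ∈ w.edges, f ∈ T.edgeSet := fun f hf => (hedges f hf).1
    have h1lev := (hlev e₁ h₁).1
    refine tree_sep hT root h₁ h₂ (hc1 e₁ h₁) (hc2 e₁ h₁) (hc1 e₂ h₂) (hc2 e₂ h₂)
      (w.transfer T hsub) ?_ ?_ <;>
    · rw [Walk.edges_transfer]
      intro hmem
      have := (hedges _ hmem).2
      omega
  -- the counting
  set g : V × ℕ → ℝ := fun p => 2 * α ^ (p.2 * K + 1) with hgdef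
  set F : Sym2 V → V × ℕ := fun e => (J e, lev e) with hFdef
  have hgnonneg : ∀ p : V × ℕ, 0 ≤ g p := by
    intro p
    positivity
  have step1 : ∑ e ∈ T.edgeFinset, edgeLen V e ≤ ∑ e ∈ T.edgeFinset, g (F e) := by
    refine Finset.sum_le_sum ?_
    intro e he
    rw [SimpleGraph.mem_edgeFinset] at he
    revert he
    induction e using Sym2.ind with
    | _ u v =>
      intro he
      have : edgeLen V s(u, v) = dist u v := rfl
      rw [this]
      exact hlen u v (T.mem_edgeSet.mp he)
  have step2 : ∑ e ∈ T.edgeFinset, g (F e) = ∑ p ∈ T.edgeFinset.image F, g p := by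
    refine (Finset.sum_image ?_).symm
    intro e₁ h₁ e₂ h₂ hF
    rw [Finset.mem_coe, SimpleGraph.mem_edgeFinset] at h₁ h₂
    rw [hFdef] at hF
    simp only [Prod.mk.injEq] at hF
    exact hinj e₁ h₁ e₂ h₂ hF.2 hF.1
  set S : Finset (V × ℕ) :=
    ((Finset.univ.erase root) ×ˢ Finset.Icc 1 r).filter (fun p => (p.2 - 1) * K ≤ b p.1)
    with hSdef
  have step3 : T.edgeFinset.image F ⊆ S := by
    intro p hp
    rw [Finset.mem_image] at hp
    obtain ⟨e, he, rfl⟩ := hp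
    rw [SimpleGraph.mem_edgeFinset] at he
    rw [hSdef, Finset.mem_filter, Finset.mem_product]
    refine ⟨⟨Finset.mem_erase.mpr ⟨hJ3 e he, Finset.mem_univ _⟩, ?_⟩, hJ2 e he⟩
    rw [Finset.mem_Icc]
    exact ⟨(hlev e he).1, (hlev e he).2⟩
  have step4 : ∑ p ∈ T.edgeFinset.image F, g p ≤ ∑ p ∈ S, g p :=
    Finset.sum_le_sum_of_subset_of_nonneg step3 (fun p _ _ => hgnonneg p)
  have step5 : ∑ p ∈ S, g p = ∑ j ∈ Finset.univ.erase root,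
      ∑ l ∈ (Finset.Icc 1 r).filter (fun l => (l - 1) * K ≤ b j), g (j, l) := by
    rw [hSdef, Finset.sum_filter, Finset.sum_product]
    congr 1
    ext j
    rw [Finset.sum_filter]
  have step6 : ∀ j : V, ∑ l ∈ (Finset.Icc 1 r).filter (fun l => (l - 1) * K ≤ b j), g (j, l) ≤
      (2 * α ^ (2 * K + 1) / (α ^ K - 1)) * α ^ (b j) := by
    intro j
    set L : ℕ := b j / K + 2 with hLdef
    have hxlt : (1:ℝ) < α ^ K := one_lt_pow₀ hα1 (by omega)
    have hx0 : (0:ℝ) < α ^ K - 1 := by linarith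
    have hsub : (Finset.Icc 1 r).filter (fun l => (l - 1) * K ≤ b j) ⊆ Finset.range L := by
      intro l hl
      rw [Finset.mem_filter, Finset.mem_Icc] at hl
      rw [Finset.mem_range, hLdef]
      have : l - 1 ≤ b j / K := (Nat.le_div_iff_mul_le (by omega)).mpr hl.2
      omega
    have h1 : ∑ l ∈ (Finset.Icc 1 r).filter (fun l => (l - 1) * K ≤ b j), g (j, l) ≤
        ∑ l ∈ Finset.range L, g (j, l) :=
      Finset.sum_le_sum_of_subset_of_nonneg hsub (fun p _ _ => hgnonneg _)
    have h2 : ∑ l ∈ Finset.range L, g (j, l) = 2 * α * ∑ l ∈ Finset.range L, (α ^ K) ^ l := by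
      rw [Finset.mul_sum]
      refine Finset.sum_congr rfl ?_
      intro l _
      rw [hgdef]
      show 2 * α ^ (l * K + 1) = 2 * α * (α ^ K) ^ l
      rw [pow_succ, mul_comm l K, pow_mul]
      ring
    have h3 : ∑ l ∈ Finset.range L, (α ^ K) ^ l = ((α ^ K) ^ L - 1) / (α ^ K - 1) :=
      geom_sum_eq (ne_of_gt hxlt) L
    have h5 : (α ^ K) ^ L ≤ α ^ (b j + 2 * K) := by
      rw [← pow_mul]
      apply pow_le_pow_right₀ hα1.le
      have hdm : b j / K * K ≤ b j := Nat.div_mul_le_self (b j) K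
      calc K * L = b j / K * K + 2 * K := by rw [hLdef]; ring
        _ ≤ b j + 2 * K := by omega
    have h6 : ((α ^ K) ^ L - 1) / (α ^ K - 1) ≤ α ^ (b j + 2 * K) / (α ^ K - 1) := by
      gcongr
      linarith
    have h7 : 2 * α * (α ^ (b j + 2 * K) / (α ^ K - 1)) =
        (2 * α ^ (2 * K + 1) / (α ^ K - 1)) * α ^ (b j) := by
      rw [pow_add, pow_succ]
      field_simp
    calc ∑ l ∈ (Finset.Icc 1 r).filter (fun l => (l - 1) * K ≤ b j), g (j, l)
        ≤ ∑ l ∈ Finset.range L, g (j, l) := h1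
      _ = 2 * α * (((α ^ K) ^ L - 1) / (α ^ K - 1)) := by rw [h2, h3]
      _ ≤ 2 * α * (α ^ (b j + 2 * K) / (α ^ K - 1)) := by
          apply mul_le_mul_of_nonneg_left h6 (by linarith)
      _ = (2 * α ^ (2 * K + 1) / (α ^ K - 1)) * α ^ (b j) := h7
  calc ∑ e ∈ T.edgeFinset, edgeLen V e ≤ ∑ p ∈ S, g p := by
        rw [← step5] at *
        exact le_trans step1 (le_of_le_of_eq (le_of_eq step2) rfl |>.trans step4)
    _ ≤ ∑ j ∈ Finset.univ.erase root, (2 * α ^ (2 * K + 1) / (α ^ K - 1)) * α ^ (b j) := by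
        rw [step5]
        exact Finset.sum_le_sum (fun j _ => step6 j)
    _ = (2 * α ^ (2 * K + 1) / (α ^ K - 1)) * ∑ v ∈ Finset.univ.erase root, α ^ (b v) := by
        rw [Finset.mul_sum]
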